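/- Let Λ be a finite nonempty type, d ≥ 1, B : Λ → Λ → Matrix (Fin d) (Fin d) ℂ with ∑_{i∈Λ} (B_j^i)ᴴ * B_j^i = 1 for every j, and ρ : Λ → Matrix (Fin d) (Fin d) ℂ with each ρ_j positive semidefinite and Tr(ρ_j) a positive real. Set M_j^i := B_j^i ⊗ₖ E_{ij}, φ_{jj'}(b) := ((Tr ρ_j)^{1/2} (Tr ρ_{j'})^{1/2})⁻¹ · Tr(((ρ_j^{1/2} * ρ_{j'}^{1/2}) ⊗ₖ E_{j' j}) * b), and φ_j := φ_{jj}. Then for every m ≥ 1 and every a ∈ Matrix (Fin d × Λ) (Fin d × Λ) ℂ, the backward Markov operator satisfies: ∑_{i,j,j'∈Λ} (φ_{jj'}(a) · (φ_{jj'}(1))^m) • ((M_j^i)ᴴ * M_{j'}^i) = ∑_{j∈Λ} φ_j(a) • (1 ⊗ₖ E_{jj}). -/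

import Mathlib

open Matrix Kronecker
open scoped ComplexOrder

/-- The positive semidefinite square root, as defined in the older Mathlib
(`Matrix.PosSemidef.sqrt`, since removed). -/
noncomputable def Matrix.PosSemidef.sqrt {n 𝕜 : Type*} [Fintype n] [RCLike 𝕜] [DecidableEq n]
    {A : Matrix n n 𝕜} (hA : A.PosSemidef) : Matrix n n 𝕜 :=
  hA.1.eigenvectorUnitary.1 * diagonal ((↑) ∘ (√·) ∘ hA.1.eigenvalues) *
    (star hA.1.eigenvectorUnitary : Matrix n n 𝕜)

/-- The functional `φ_{jj'}(b) = ((Tr ρ_j)^{1/2}(Tr ρ_{j'})^{1/2})⁻¹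
Tr((ρ_j^{1/2} ρ_{j'}^{1/2} ⊗ₖ E_{j'j}) b)`. -/
noncomputable def phiJJ {Λ : Type*} [Fintype Λ] [DecidableEq Λ] {d : ℕ}
    (ρ : Λ → Matrix (Fin d) (Fin d) ℂ) (hρ : ∀ j, (ρ j).PosSemidef) (j j' : Λ)
    (b : Matrix (Fin d × Λ) (Fin d × Λ) ℂ) : ℂ :=
  ((Real.sqrt (ρ j).trace.re * Real.sqrt (ρ j').trace.re : ℝ) : ℂ)⁻¹ *
    ((((hρ j).sqrt * (hρ j').sqrt) ⊗ₖ single j' j (1 : ℂ)) * b).trace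

/-- The dilated operator `M_j^i = B_j^i ⊗ₖ E_{ij}`. -/
noncomputable def Mop {Λ : Type*} [Fintype Λ] [DecidableEq Λ] {d : ℕ}
    (B : Λ → Λ → Matrix (Fin d) (Fin d) ℂ) (j i : Λ) :
    Matrix (Fin d × Λ) (Fin d × Λ) ℂ :=
  B j i ⊗ₖ single i j (1 : ℂ)

lemma kron_conjTranspose {l m n p : Type*} (A : Matrix l m ℂ) (B : Matrix n p ℂ) :
    (A ⊗ₖ B)ᴴ = Aᴴ ⊗ₖ Bᴴ := by
  ext ⟨i,j⟩ ⟨k,l⟩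
  simp [kroneckerMap_apply, conjTranspose_apply, mul_comm]

lemma stdBasis_conjTranspose {n : Type*} [DecidableEq n] (i j : n) :
    (single i j (1:ℂ))ᴴ = single j i (1:ℂ) := by
  ext k l
  simp [conjTranspose_apply, single, and_comm]

lemma sum_kron {ι l m n p : Type*} (s : Finset ι) (A : ι → Matrix l m ℂ)
    (C : Matrix n p ℂ) : (∑ i ∈ s, A i) ⊗ₖ C = ∑ i ∈ s, A i ⊗ₖ C := by
  ext ⟨i,j⟩ ⟨k,l⟩
  simp [kroneckerMap_apply, Matrix.sum_apply, Finset.sum_mul]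

theorem Matrix.PosSemidef.sqrt_mul_self {n 𝕜 : Type*} [Fintype n] [RCLike 𝕜] [DecidableEq n]
    {A : Matrix n n 𝕜} (hA : A.PosSemidef) : hA.sqrt * hA.sqrt = A := by
  conv_rhs => rw [hA.1.spectral_theorem]
  have hU : (star hA.1.eigenvectorUnitary : Matrix n n 𝕜) * hA.1.eigenvectorUnitary.1 = 1 :=
    Unitary.coe_star_mul_self _
  rw [Matrix.PosSemidef.sqrt, Unitary.conjStarAlgAut_apply]
  simp only [Matrix.mul_assoc]
  rw [← Matrix.mul_assoc _ hA.1.eigenvectorUnitary.1, hU, Matrix.one_mul, ← Matrix.mul_assoc (diagonal _),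
    diagonal_mul_diagonal]
  congr 3
  funext i
  simp only [Function.comp_apply, ← RCLike.ofReal_mul, Real.mul_self_sqrt (hA.eigenvalues_nonneg i)]

/-- the backward Markov operator of the transition expectation satisfies
`P(a) = ∑ j, φ_j(a) • (1 ⊗ₖ E_{jj})`, i.e.
`∑ i j j', (φ_{jj'}(a) (φ_{jj'}(1))^m) • ((M_j^i)ᴴ M_{j'}^i) = ∑ j, φ_{jj}(a) • (1 ⊗ₖ E_{jj})`. -/
theorem stmt_9 {Λ : Type*} [Fintype Λ] [DecidableEq Λ] [Nonempty Λ] {d : ℕ} (hd : 1 ≤ d)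
    (B : Λ → Λ → Matrix (Fin d) (Fin d) ℂ)
    (hB : ∀ j : Λ, ∑ i : Λ, (B j i)ᴴ * B j i = 1)
    (ρ : Λ → Matrix (Fin d) (Fin d) ℂ) (hρ : ∀ j, (ρ j).PosSemidef)
    (hTr : ∀ j, 0 < (ρ j).trace) (m : ℕ) (hm : 1 ≤ m)
    (a : Matrix (Fin d × Λ) (Fin d × Λ) ℂ) :
    ∑ i : Λ, ∑ j : Λ, ∑ j' : Λ,
        (phiJJ ρ hρ j j' a * (phiJJ ρ hρ j j' 1) ^ m) • ((Mop B j i)ᴴ * Mop B j' i) =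
      ∑ j : Λ, phiJJ ρ hρ j j a • ((1 : Matrix (Fin d) (Fin d) ℂ) ⊗ₖ single j j (1 : ℂ)) := by
  have hmne : m ≠ 0 := Nat.one_le_iff_ne_zero.mp hm
  have phi1_ne : ∀ j j' : Λ, j ≠ j' → phiJJ ρ hρ j j' 1 = 0 := by
    intro j j' h
    unfold phiJJ
    rw [mul_one, trace_kronecker, Matrix.trace_single_eq_of_ne j' j 1 (Ne.symm h), mul_zero, mul_zero]
  have phi1_eq : ∀ j : Λ, phiJJ ρ hρ j j 1 = 1 := by
    intro j
    have ht := hTr j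
    have him : (ρ j).trace.im = 0 := by
      have := Complex.lt_def.mp ht
      exact this.2.symm
    have hre : 0 < (ρ j).trace.re := (Complex.lt_def.mp ht).1
    have htr : (ρ j).trace = ((ρ j).trace.re : ℂ) := by
      exact (Complex.ext_iff.mpr ⟨rfl, by simp [him]⟩)
    unfold phiJJ
    rw [mul_one, trace_kronecker, Matrix.trace_single_eq_same, (hρ j).sqrt_mul_self,
      Real.mul_self_sqrt hre.le, mul_one, htr]
    simp [← Complex.ofReal_inv, ← Complex.ofReal_mul, inv_mul_cancel₀ hre.ne']
  have key : ∀ i j j' : Λ, (Mop B j i)ᴴ * Mop B j' i =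
      ((B j i)ᴴ * B j' i) ⊗ₖ single j j' (1 : ℂ) := by
    intro i j j'
    rw [Mop, Mop, kron_conjTranspose, stdBasis_conjTranspose, ← mul_kronecker_mul,
      Matrix.single_mul_single_same, one_mul]
  simp only [key]
  rw [Finset.sum_comm]
  refine Finset.sum_congr rfl fun j _ => ?_
  rw [Finset.sum_comm]
  have step : ∀ j' : Λ, ∑ i : Λ, (phiJJ ρ hρ j j' a * (phiJJ ρ hρ j j' 1) ^ m) •
      (((B j i)ᴴ * B j' i) ⊗ₖ single j j' (1 : ℂ)) =
      (phiJJ ρ hρ j j' a * (phiJJ ρ hρ j j' 1) ^ m) •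
      ((∑ i : Λ, (B j i)ᴴ * B j' i) ⊗ₖ single j j' (1 : ℂ)) := by
    intro j'
    rw [sum_kron, Finset.smul_sum]
  simp only [step]
  rw [Finset.sum_eq_single j]
  · rw [phi1_eq, one_pow, mul_one, hB j]
  · intro j' _ hne
    rw [phi1_ne j j' (Ne.symm hne), zero_pow hmne, mul_zero, zero_smul]
  · intro h
    exact absurd (Finset.mem_univ j) h
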